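/- Let K⋆(C₀) = (√((GC₀)² + C₀b + C₀Ga) − GC₀)/(b + Ga) with G, a, b > 0. Then K⋆ is a strictly increasing function of C₀ > 0. -/

import Mathlib

/-- K⋆ is strictly increasing in the static circuit power C₀. -/
theorem K_star_strictMono_in_C0
    (G a b : ℝ) (hG : 0 < G) (ha : 0 < a) (hb : 0 < b) :
    StrictMonoOn (fun C₀ : ℝ =>
      (Real.sqrt ((G * C₀) ^ 2 + C₀ * b + C₀ * G * a) - G * C₀) / (b + G * a))
      (Set.Ioi 0) := by
  intro x hx y hy hxy
  simp only [Set.mem_Ioi] at hx hy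
  have hs : 0 < b + G * a := by positivity
  have hAx : (0:ℝ) ≤ (G * x) ^ 2 + x * b + x * G * a := by positivity
  have key : Real.sqrt ((G * x) ^ 2 + x * b + x * G * a)
      < G * x + (b + G * a) / (2 * G) := by
    rw [Real.sqrt_lt' (by positivity)]
    have h : (G * x + (b + G * a) / (2 * G)) ^ 2
        = (G * x) ^ 2 + x * (b + G * a) + ((b + G * a) / (2 * G)) ^ 2 := by
      field_simp; ring
    have hq : (0:ℝ) < ((b + G * a) / (2 * G)) ^ 2 := by positivity
    nlinarith
  have hyx : (0:ℝ) < 2 * G * (y - x) := by nlinarith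
  have hkey2 : Real.sqrt ((G * x) ^ 2 + x * b + x * G * a) * (2 * G * (y - x))
      < 2 * G ^ 2 * x * (y - x) + (b + G * a) * (y - x) := by
    have e : (G * x + (b + G * a) / (2 * G)) * (2 * G * (y - x))
        = 2 * G ^ 2 * x * (y - x) + (b + G * a) * (y - x) := by
      field_simp
    have := mul_lt_mul_of_pos_right key hyx
    linarith [this, e.le, e.ge]
  have h2 : Real.sqrt ((G * x) ^ 2 + x * b + x * G * a) + (G * y - G * x)
      < Real.sqrt ((G * y) ^ 2 + y * b + y * G * a) := by
    have hL : (0:ℝ) ≤ Real.sqrt ((G * x) ^ 2 + x * b + x * G * a) + (G * y - G * x) := by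
      have := Real.sqrt_nonneg ((G * x) ^ 2 + x * b + x * G * a)
      nlinarith
    have hsq := Real.sq_sqrt hAx
    rw [← Real.sqrt_sq hL]
    apply Real.sqrt_lt_sqrt (by positivity)
    nlinarith [Real.sqrt_nonneg ((G * x) ^ 2 + x * b + x * G * a)]
  show _ / _ < _ / _
  rw [div_lt_div_iff₀ hs hs]
  nlinarith [h2, hs]
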